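/- Let H be a compact topological space, Y and X real normed vector spaces, and f : H × Y → X a continuous map. Assume: (i) there exists l > 0 such that ‖f(h,y) − f(h,y′)‖ ≤ l·‖y − y′‖ for all h ∈ H and y, y′ ∈ Y; (ii) for every ε > 0 there exists R₁ > 0 such that ‖f(h,y)‖ ≤ ε·‖y‖ whenever h ∈ H and ‖y‖ ≥ R₁. Let (cₙ) be a sequence of positive reals with cₙ → ∞, let λₙ ∈ [0,1], and fix R₀ ≥ 0. Then Sₙ := sup{ cₙ⁻¹ · λₙ · ‖f(h, cₙ·y)‖ : h ∈ H, y ∈ Y, ‖y‖ ≤ R₀ } tends to 0 as n → ∞. -/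

import Mathlib

/-- if `f : H × Y → X` is continuous, globally Lipschitz in the second variable
uniformly in `h ∈ H` (with `H` compact), and sublinear at infinity uniformly in `h`, then for
any positive `cₙ → ∞`, any `λₙ ∈ [0,1]` and any `R₀ ≥ 0`, the quantities
`Sₙ = sup { cₙ⁻¹ λₙ ‖f(h, cₙ y)‖ : h ∈ H, ‖y‖ ≤ R₀ }` tend to `0`. -/
theorem rescaled_sup_tendsto_zero {H Y X : Type*} [TopologicalSpace H] [CompactSpace H]
    [NormedAddCommGroup Y] [NormedSpace ℝ Y]
    [NormedAddCommGroup X] [NormedSpace ℝ X]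
    (f : H × Y → X) (hf : Continuous f)
    (l : ℝ) (hl : 0 < l)
    (hLip : ∀ (h : H) (y y' : Y), ‖f (h, y) - f (h, y')‖ ≤ l * ‖y - y'‖)
    (hsub : ∀ ε : ℝ, 0 < ε → ∃ R₁ : ℝ, 0 < R₁ ∧
      ∀ (h : H) (y : Y), R₁ ≤ ‖y‖ → ‖f (h, y)‖ ≤ ε * ‖y‖)
    (c : ℕ → ℝ) (hcpos : ∀ n, 0 < c n)
    (hc : Filter.Tendsto c Filter.atTop Filter.atTop)
    (lam : ℕ → ℝ) (hlam : ∀ n, lam n ∈ Set.Icc (0 : ℝ) 1)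
    (R₀ : ℝ) (hR₀ : 0 ≤ R₀) :
    Filter.Tendsto
      (fun n => sSup {r : ℝ | ∃ (h : H) (y : Y), ‖y‖ ≤ R₀ ∧
        r = (c n)⁻¹ * lam n * ‖f (h, c n • y)‖})
      Filter.atTop (nhds 0) := by
  by_cases hH : Nonempty H
  · obtain ⟨h₀⟩ := hH
    have hcont : Continuous fun h : H => ‖f (h, (0 : Y))‖ := by
      exact (hf.comp (continuous_id.prodMk continuous_const)).norm
    obtain ⟨hm, -, hM⟩ := isCompact_univ.exists_isMaxOn ⟨h₀, trivial⟩ hcont.continuousOn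
    set M := ‖f (hm, (0 : Y))‖ with hMdef
    have hM0 : 0 ≤ M := norm_nonneg _
    rw [Metric.tendsto_atTop]
    intro ε hε
    set ε' : ℝ := ε / (2 * (R₀ + 1)) with hε'def
    have hε' : 0 < ε' := by positivity
    obtain ⟨R₁, hR₁, hfar⟩ := hsub ε' hε'
    obtain ⟨N, hN⟩ := Filter.eventually_atTop.mp (hc.eventually_ge_atTop ((M + l * R₁) / (ε / 2)))
    refine ⟨N, fun n hn => ?_⟩
    set s : Set ℝ := {r : ℝ | ∃ (h : H) (y : Y), ‖y‖ ≤ R₀ ∧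
        r = (c n)⁻¹ * lam n * ‖f (h, c n • y)‖} with hsdef
    have hcn := hcpos n
    have hlamn := hlam n
    have hcn' : 0 ≤ (c n)⁻¹ := by positivity
    set B : ℝ := ε' * R₀ + (M + l * R₁) / c n with hBdef
    have hB0 : 0 ≤ B := by positivity
    have hub : ∀ r ∈ s, r ≤ B := by
      rintro r ⟨h, y, hy, rfl⟩
      rcases le_or_gt R₁ ‖c n • y‖ with hfarcase | hnear
      · have h1 : ‖f (h, c n • y)‖ ≤ ε' * (c n * R₀) := by
          calc ‖f (h, c n • y)‖ ≤ ε' * ‖c n • y‖ := hfar h _ hfarcase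
            _ = ε' * (c n * ‖y‖) := by rw [norm_smul, Real.norm_eq_abs, abs_of_pos hcn]
            _ ≤ ε' * (c n * R₀) := by gcongr
        have h2 : (c n)⁻¹ * lam n * ‖f (h, c n • y)‖ ≤ (c n)⁻¹ * 1 * (ε' * (c n * R₀)) :=
          mul_le_mul (mul_le_mul_of_nonneg_left hlamn.2 hcn') h1 (norm_nonneg _) (by positivity)
        have h3 : (c n)⁻¹ * 1 * (ε' * (c n * R₀)) = ε' * R₀ := by
          field_simp
        have h4 : 0 ≤ (M + l * R₁) / c n := by positivity
        rw [hBdef]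
        nlinarith [h2, h3]
      · have h1 : ‖f (h, c n • y)‖ ≤ M + l * R₁ := by
          have := hLip h (c n • y) 0
          have hM' := hM (Set.mem_univ h)
          calc ‖f (h, c n • y)‖ ≤ ‖f (h, c n • y) - f (h, 0)‖ + ‖f (h, (0 : Y))‖ := by
                have := norm_sub_norm_le (f (h, c n • y)) (f (h, (0 : Y)))
                nlinarith [norm_nonneg (f (h, c n • y) - f (h, (0:Y)))]
            _ ≤ l * ‖c n • y - 0‖ + M :=
                add_le_add (hLip h _ _) (hM (Set.mem_univ h))
            _ ≤ M + l * R₁ := by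
                rw [sub_zero]
                nlinarith [hnear.le, hl]
        have h2 : (c n)⁻¹ * lam n * ‖f (h, c n • y)‖ ≤ (c n)⁻¹ * 1 * (M + l * R₁) :=
          mul_le_mul (mul_le_mul_of_nonneg_left hlamn.2 hcn') h1 (norm_nonneg _) (by positivity)
        have h3 : (c n)⁻¹ * 1 * (M + l * R₁) = (M + l * R₁) / c n := by
          field_simp
        have h4 : 0 ≤ ε' * R₀ := by positivity
        rw [hBdef]; nlinarith [h2, h3]
    have hSle : sSup s ≤ B := Real.sSup_le hub hB0
    have hSnn : 0 ≤ sSup s := Real.sSup_nonneg (by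
      rintro r ⟨h, y, hy, rfl⟩
      exact mul_nonneg (mul_nonneg hcn' (hlam n).1) (norm_nonneg _))
    have hBlt : B < ε := by
      have h5 : (M + l * R₁) / c n ≤ ε / 2 := by
        rw [div_le_iff₀ hcn]
        have h6 := hN n hn
        rw [div_le_iff₀ (by linarith : (0:ℝ) < ε / 2)] at h6
        nlinarith
      have h7 : ε' * R₀ < ε / 2 := by
        rw [hε'def, div_mul_eq_mul_div, div_lt_iff₀ (by linarith : (0:ℝ) < 2 * (R₀ + 1))]
        nlinarith
      rw [hBdef]; linarith
    rw [Real.dist_eq, sub_zero, abs_of_nonneg hSnn]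
    exact lt_of_le_of_lt hSle hBlt
  · have heq : (fun n => sSup {r : ℝ | ∃ (h : H) (y : Y), ‖y‖ ≤ R₀ ∧
        r = (c n)⁻¹ * lam n * ‖f (h, c n • y)‖}) = fun _ => (0 : ℝ) := by
      funext n
      have : {r : ℝ | ∃ (h : H) (y : Y), ‖y‖ ≤ R₀ ∧
          r = (c n)⁻¹ * lam n * ‖f (h, c n • y)‖} = ∅ := by
        ext r
        simp only [Set.mem_setOf_eq, Set.mem_empty_iff_false, iff_false]
        rintro ⟨h, -⟩
        exact hH ⟨h⟩
      rw [this, Real.sSup_empty]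
    rw [heq]
    exact tendsto_const_nhds
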